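/- Let L* be a d-subspace of ℝ^D, let b ∈ ℝ^D, and let Q denote the orthogonal projection of ℝ^D onto the orthogonal complement of L*. Then: (i) Qb is the unique vector of minimal Euclidean norm among all b' ∈ ℝ^D with b − b' ∈ L* (i.e., among all offsets representing the affine subspace b + L*); (ii) if a dataset x_1, …, x_N in ℝ^D has N_in points lying in the affine subspace b + L* and N_out = N − N_in other points, with N_in > N_out, then Qx_i = Qb for every point x_i in b + L*, and Qb is the unique minimizer over y ∈ ℝ^D of Σ_{i=1}^N ‖y − Q x_i‖; that is, the geometric median of the dataset projected onto the orthogonal complement of L* exactly recovers the minimal-norm offset of the affine subspace. -/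

import Mathlib

open Module RealInnerProductSpace

/-- Let `Q` be the orthogonal projection onto the orthogonal complement of
the `d`-subspace `L*`. (i) `Qb` is the unique minimal-norm offset among all `b'` with
`b − b' ∈ L*`. (ii) If `N_in` of the points lie in the affine subspace `b + L*` and
`N_out = N − N_in` do not, with `N_in > N_out`, then `Q x_i = Q b` for every point of
`b + L*`, and `Qb` is the unique geometric median of the projected dataset `(Q x_i)_i`. -/
theorem stmt_14 (D d N Nin Nout : ℕ)
    (Lstar : Submodule ℝ (EuclideanSpace ℝ (Fin D)))
    (hLstar : finrank ℝ Lstar = d)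
    (b : EuclideanSpace ℝ (Fin D))
    (Q : EuclideanSpace ℝ (Fin D) →L[ℝ] EuclideanSpace ℝ (Fin D))
    (hQ : Q = (Lstarᗮ).subtypeL.comp (Submodule.orthogonalProjectionOnto Lstarᗮ))
    (x : Fin N → EuclideanSpace ℝ (Fin D))
    (hNin : Nat.card {i : Fin N // x i - b ∈ Lstar} = Nin)
    (hN : Nin + Nout = N) (hmaj : Nout < Nin) :
    -- (i) `Qb` is the unique minimal-norm representative of the offset of `b + L*`
    (b - Q b ∈ Lstar) ∧
    (∀ b' : EuclideanSpace ℝ (Fin D), b - b' ∈ Lstar → b' ≠ Q b → ‖Q b‖ < ‖b'‖) ∧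
    -- (ii) projecting kills the inliers' spread and the geometric median recovers `Qb`
    (∀ i, x i - b ∈ Lstar → Q (x i) = Q b) ∧
    (∀ y : EuclideanSpace ℝ (Fin D), ∑ i, ‖Q b - Q (x i)‖ ≤ ∑ i, ‖y - Q (x i)‖) ∧
    (∀ y : EuclideanSpace ℝ (Fin D), y ≠ Q b →
      ∑ i, ‖Q b - Q (x i)‖ < ∑ i, ‖y - Q (x i)‖) := by
  classical
  have hKo : Lstarᗮᗮ = Lstar := Submodule.orthogonal_orthogonal Lstar
  have hQmem : ∀ v, Q v ∈ Lstarᗮ := by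
    intro v; rw [hQ]; exact (Submodule.orthogonalProjectionOnto Lstarᗮ v).2
  have hsub : ∀ v, v - Q v ∈ Lstar := by
    intro v
    have := Submodule.sub_starProjection_mem_orthogonal (K := Lstarᗮ) v
    rw [hKo] at this
    rw [hQ]; exact this
  have hzero : ∀ w, w ∈ Lstar → Q w = 0 := by
    intro w hw
    have : Submodule.orthogonalProjectionOnto Lstarᗮ w = 0 :=
      Submodule.orthogonalProjectionOnto_apply_of_mem_orthogonal (by rwa [hKo])
    simp [hQ, this]
  have hQeq : ∀ v, b - v ∈ Lstar → Q v = Q b := by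
    intro v hv
    have h0 := hzero _ hv
    rw [map_sub, sub_eq_zero] at h0
    exact h0.symm
  have hQx : ∀ i, x i - b ∈ Lstar → Q (x i) = Q b := by
    intro i hi
    exact hQeq (x i) (by simpa using Lstar.neg_mem hi)
  -- (i) uniqueness of minimal norm
  have hmin : ∀ b' : EuclideanSpace ℝ (Fin D), b - b' ∈ Lstar → b' ≠ Q b → ‖Q b‖ < ‖b'‖ := by
    intro b' hb' hne
    have hQb' : Q b' = Q b := hQeq b' hb'
    have hinner : (inner ℝ (b' - Q b') (Q b') : ℝ) = 0 :=
      (Submodule.mem_orthogonal Lstar (Q b')).1 (hQmem b') _ (hsub b')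
    have hdecomp : b' = Q b' + (b' - Q b') := by abel
    have hsq : ‖b'‖ ^ 2 = ‖Q b'‖ ^ 2 + ‖b' - Q b'‖ ^ 2 := by
      calc ‖b'‖ ^ 2 = ‖Q b' + (b' - Q b')‖ ^ 2 := by rw [← hdecomp]
        _ = ‖Q b'‖ ^ 2 + 2 * (inner ℝ (Q b') (b' - Q b') : ℝ) + ‖b' - Q b'‖ ^ 2 := norm_add_sq_real _ _
        _ = ‖Q b'‖ ^ 2 + ‖b' - Q b'‖ ^ 2 := by
              rw [real_inner_comm, hinner]; ring
    have hne' : b' - Q b' ≠ 0 := by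
      rw [hQb']; exact sub_ne_zero.2 hne
    have hpos : 0 < ‖b' - Q b'‖ := norm_pos_iff.2 hne'
    have h1 : ‖Q b‖ ^ 2 < ‖b'‖ ^ 2 := by rw [← hQb']; nlinarith
    nlinarith [norm_nonneg (Q b), norm_nonneg b']
  -- counting
  set S : Finset (Fin N) := Finset.univ.filter (fun i => x i - b ∈ Lstar) with hS
  have hScard : S.card = Nin := by
    rw [← hNin, Nat.card_eq_fintype_card, Fintype.card_subtype]
  have hSccard : Sᶜ.card = Nout := by
    rw [Finset.card_compl, hScard, Fintype.card_fin, ← hN]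
    omega
  -- key estimate
  have key : ∀ y : EuclideanSpace ℝ (Fin D),
      ∑ i, ‖Q b - Q (x i)‖ + ((Nin : ℝ) - Nout) * ‖y - Q b‖ ≤ ∑ i, ‖y - Q (x i)‖ := by
    intro y
    have hL : ∑ i, ‖Q b - Q (x i)‖
        = ∑ i ∈ S, ‖Q b - Q (x i)‖ + ∑ i ∈ Sᶜ, ‖Q b - Q (x i)‖ :=
      (Finset.sum_add_sum_compl S _).symm
    have hR : ∑ i, ‖y - Q (x i)‖
        = ∑ i ∈ S, ‖y - Q (x i)‖ + ∑ i ∈ Sᶜ, ‖y - Q (x i)‖ :=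
      (Finset.sum_add_sum_compl S _).symm
    have hLS : ∑ i ∈ S, ‖Q b - Q (x i)‖ = 0 := by
      apply Finset.sum_eq_zero
      intro i hi
      rw [hQx i (by simpa [hS] using hi)]
      simp
    have hRS : ∑ i ∈ S, ‖y - Q (x i)‖ = (Nin : ℝ) * ‖y - Q b‖ := by
      rw [← hScard]
      rw [Finset.sum_congr rfl (fun i hi => by rw [hQx i (by simpa [hS] using hi)])]
      simp [mul_comm]
    have hout : ∑ i ∈ Sᶜ, ‖Q b - Q (x i)‖
        ≤ (Nout : ℝ) * ‖y - Q b‖ + ∑ i ∈ Sᶜ, ‖y - Q (x i)‖ := by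
      have hterm : ∀ i ∈ Sᶜ, ‖Q b - Q (x i)‖ ≤ ‖y - Q b‖ + ‖y - Q (x i)‖ := by
        intro i _
        calc ‖Q b - Q (x i)‖ = ‖(Q b - y) + (y - Q (x i))‖ := by abel_nf
          _ ≤ ‖Q b - y‖ + ‖y - Q (x i)‖ := norm_add_le _ _
          _ = ‖y - Q b‖ + ‖y - Q (x i)‖ := by rw [norm_sub_rev]
      calc ∑ i ∈ Sᶜ, ‖Q b - Q (x i)‖ ≤ ∑ i ∈ Sᶜ, (‖y - Q b‖ + ‖y - Q (x i)‖) :=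
            Finset.sum_le_sum hterm
        _ = (Nout : ℝ) * ‖y - Q b‖ + ∑ i ∈ Sᶜ, ‖y - Q (x i)‖ := by
            rw [Finset.sum_add_distrib, Finset.sum_const, hSccard, nsmul_eq_mul]
    rw [hL, hR, hLS, hRS]
    linarith
  refine ⟨hsub b, hmin, hQx, ?_, ?_⟩
  · intro y
    have := key y
    have hd : (0 : ℝ) ≤ ((Nin : ℝ) - Nout) * ‖y - Q b‖ := by
      apply mul_nonneg _ (norm_nonneg _)
      have : (Nout : ℝ) < Nin := by exact_mod_cast hmaj
      linarith
    linarith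
  · intro y hy
    have := key y
    have hpos : 0 < ((Nin : ℝ) - Nout) * ‖y - Q b‖ := by
      apply mul_pos
      · have : (Nout : ℝ) < Nin := by exact_mod_cast hmaj
        linarith
      · exact norm_pos_iff.2 (sub_ne_zero.2 hy)
    linarith
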